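/- Let 𝔤 be a Lie algebra admitting a flat left-invariant Riemannian structure in Milnor's sense: 𝔤 = A₁ ⊕ A₂ is an orthogonal direct sum where A₁ is an abelian ideal, A₂ is an abelian subalgebra, and for each a ∈ A₂ the map ad_a restricted to A₁ is skew-adjoint with respect to a positive-definite inner product. If dim 𝔤 ≥ 5 (and dim 𝔤 odd), then 𝔤 has no contact form. -/

import Mathlib

open Module Submodule RealInnerProductSpace


theorem halfdim : ∀ (N : ℕ) {E : Type*} [NormedAddCommGroup E] [InnerProductSpace ℝ E]
    [FiniteDimensional ℝ E], finrank ℝ E ≤ N → ∀ {ι : Type*} (T : ι → E →ₗ[ℝ] E),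
    (∀ i (x y : E), ⟪T i x, y⟫ = -⟪x, T i y⟫) →
    (∀ i j (x : E), T i (T j x) = T j (T i x)) → ∀ u : E,
    2 * finrank ℝ (span ℝ (Set.range fun i => T i u)) ≤ finrank ℝ E := by
  intro N
  induction N with
  | zero =>
    intro E _ _ _ hE ι T hsk hc u
    have h1 : finrank ℝ (span ℝ (Set.range fun i => T i u)) ≤ finrank ℝ E :=
      Submodule.finrank_le _
    omega
  | succ N ih =>
    intro E _ _ _ hE ι T hsk hc u
    by_cases hW : ∃ W : Submodule ℝ E, (∀ i, ∀ x ∈ W, T i x ∈ W) ∧ W ≠ ⊥ ∧ W ≠ ⊤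
    · obtain ⟨W, hWinv, hWbot, hWtop⟩ := hW
      have hWinv' : ∀ i, ∀ x ∈ Wᗮ, T i x ∈ Wᗮ := by
        intro i x hx
        rw [Submodule.mem_orthogonal] at hx ⊢
        intro w hw
        have h1 : ⟪T i w, x⟫ = -⟪w, T i x⟫ := hsk i w x
        have h2 : ⟪T i w, x⟫ = 0 := hx _ (hWinv i w hw)
        linarith
      have hfr : finrank ℝ W + finrank ℝ Wᗮ = finrank ℝ E :=
        Submodule.finrank_add_finrank_orthogonal W
      have hWpos : 0 < finrank ℝ W := by
        rw [Module.finrank_pos_iff]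
        exact Submodule.nontrivial_iff_ne_bot.mpr hWbot
      have hWopos : 0 < finrank ℝ Wᗮ := by
        rw [Module.finrank_pos_iff]
        exact Submodule.nontrivial_iff_ne_bot.mpr
          (fun h => hWtop (Submodule.orthogonal_eq_bot_iff.mp h))
      have hcompl : IsCompl W Wᗮ := Submodule.isCompl_orthogonal_of_hasOrthogonalProjection
      obtain ⟨a, ha, b, hb, hab⟩ : ∃ a ∈ W, ∃ b ∈ Wᗮ, a + b = u := by
        have : u ∈ W ⊔ Wᗮ := by rw [hcompl.sup_eq_top]; trivial
        exact Submodule.mem_sup.mp this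
      -- restricted families
      set TW : ι → ↥W →ₗ[ℝ] ↥W := fun i => (T i).restrict (hWinv i) with hTW
      set TO : ι → ↥Wᗮ →ₗ[ℝ] ↥Wᗮ := fun i => (T i).restrict (hWinv' i) with hTO
      have hskW : ∀ i (x y : ↥W), ⟪TW i x, y⟫ = -⟪x, TW i y⟫ := fun i x y => hsk i x y
      have hskO : ∀ i (x y : ↥Wᗮ), ⟪TO i x, y⟫ = -⟪x, TO i y⟫ := fun i x y => hsk i x y
      have hcW : ∀ i j (x : ↥W), TW i (TW j x) = TW j (TW i x) := fun i j x =>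
        Subtype.ext (hc i j x)
      have hcO : ∀ i j (x : ↥Wᗮ), TO i (TO j x) = TO j (TO i x) := fun i j x =>
        Subtype.ext (hc i j x)
      have ihW := ih (by omega : finrank ℝ W ≤ N) TW hskW hcW ⟨a, ha⟩
      have ihO := ih (by omega : finrank ℝ Wᗮ ≤ N) TO hskO hcO ⟨b, hb⟩
      -- map spans into E
      have hmapW : (span ℝ (Set.range fun i => TW i ⟨a, ha⟩)).map W.subtype
          = span ℝ (Set.range fun i => T i a) := by
        rw [Submodule.map_span, ← Set.range_comp]
        rfl
      have hmapO : (span ℝ (Set.range fun i => TO i ⟨b, hb⟩)).map Wᗮ.subtype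
          = span ℝ (Set.range fun i => T i b) := by
        rw [Submodule.map_span, ← Set.range_comp]
        rfl
      have hfrW : finrank ℝ (span ℝ (Set.range fun i => T i a))
          = finrank ℝ (span ℝ (Set.range fun i => TW i ⟨a, ha⟩)) := by
        rw [← hmapW, Submodule.finrank_map_subtype_eq]
      have hfrO : finrank ℝ (span ℝ (Set.range fun i => T i b))
          = finrank ℝ (span ℝ (Set.range fun i => TO i ⟨b, hb⟩)) := by
        rw [← hmapO, Submodule.finrank_map_subtype_eq]
      have hle : span ℝ (Set.range fun i => T i u) ≤
          span ℝ (Set.range fun i => T i a) ⊔ span ℝ (Set.range fun i => T i b) := by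
        rw [Submodule.span_le]
        rintro x ⟨i, rfl⟩
        have heq : T i u = T i a + T i b := by rw [← hab, map_add]
        show T i u ∈ _
        rw [heq]
        exact Submodule.add_mem _
          (Submodule.mem_sup_left (Submodule.subset_span ⟨i, rfl⟩))
          (Submodule.mem_sup_right (Submodule.subset_span ⟨i, rfl⟩))
      have h1 : finrank ℝ (span ℝ (Set.range fun i => T i u)) ≤
          finrank ℝ (span ℝ (Set.range fun i => T i a)) +
          finrank ℝ (span ℝ (Set.range fun i => T i b)) :=
        le_trans (Submodule.finrank_mono hle)
          (Submodule.finrank_add_le_finrank_add_finrank _ _)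
      omega
    · -- no proper invariant subspace
      have key : ∀ V : Submodule ℝ E, (∀ i, ∀ x ∈ V, T i x ∈ V) → V ≠ ⊥ → V = ⊤ := by
        intro V h1 h2
        by_contra h3
        exact hW ⟨V, h1, h2, h3⟩
      by_cases hu : ∀ i, T i u = 0
      · have : span ℝ (Set.range fun i => T i u) ≤ ⊥ := by
          rw [Submodule.span_le]
          rintro x ⟨i, rfl⟩
          simp [hu i]
        rw [le_bot_iff] at this
        rw [this]
        simp
      · push_neg at hu
        obtain ⟨i₀, hi₀⟩ := hu
        have hu0 : u ≠ 0 := fun h => hi₀ (by simp [h])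
        haveI : Nontrivial E := nontrivial_of_ne u 0 hu0
        have hposin : ∀ v : E, v ≠ 0 → 0 < ⟪v, v⟫ := fun v hv =>
          lt_of_le_of_ne real_inner_self_nonneg (Ne.symm (inner_self_ne_zero.mpr hv))
        -- every symmetric operator commuting with the family is scalar
        have hscalar : ∀ B : E →ₗ[ℝ] E, B.IsSymmetric → (∀ j x, B (T j x) = T j (B x)) →
            ∃ μ : ℝ, ∀ x, B x = μ • x := by
          intro B hB hBc
          have htop : (⨆ μ, Module.End.eigenspace B μ) = ⊤ := by
            have := hB.orthogonalComplement_iSup_eigenspaces_eq_bot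
            rwa [Submodule.orthogonal_eq_bot_iff] at this
          have h3 : ∃ μ, Module.End.eigenspace B μ ≠ ⊥ := by
            by_contra h
            push_neg at h
            rw [iSup_congr h, iSup_bot] at htop
            exact bot_ne_top htop
          obtain ⟨μ, hμ⟩ := h3
          have hinv : ∀ j, ∀ x ∈ Module.End.eigenspace B μ, T j x ∈ Module.End.eigenspace B μ := by
            intro j x hx
            rw [Module.End.mem_eigenspace_iff] at hx ⊢
            rw [hBc j x, hx, map_smul]
          have htop' := key _ hinv hμ
          exact ⟨μ, fun x => Module.End.mem_eigenspace_iff.mp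
            (htop' ▸ Submodule.mem_top : x ∈ Module.End.eigenspace B μ)⟩
        -- squares are negative scalars
        have hsq : ∀ i, T i u ≠ 0 → ∃ μ : ℝ, μ < 0 ∧ ∀ x, T i (T i x) = μ • x := by
          intro i hi
          have hsymm : (T i ∘ₗ T i).IsSymmetric := by
            intro x y
            simp only [LinearMap.comp_apply]
            rw [hsk i (T i x) y, hsk i x (T i y), neg_neg]
          obtain ⟨μ, hμ⟩ := hscalar (T i ∘ₗ T i)  hsymm (fun j x => by
            simp only [LinearMap.comp_apply]
            rw [hc i j x, hc i j (T i x)])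
          refine ⟨μ, ?_, fun x => hμ x⟩
          have h1 : ⟪T i (T i u), u⟫ = -⟪T i u, T i u⟫ := hsk i (T i u) u
          have h4 : T i (T i u) = μ • u := hμ u
          rw [h4, real_inner_smul_left] at h1
          have h2 : 0 < ⟪u, u⟫ := hposin u hu0
          have h3 : 0 < ⟪T i u, T i u⟫ := hposin _ hi
          nlinarith
        obtain ⟨μ₀, hμ₀neg, hμ₀⟩ := hsq i₀ hi₀
        set c : ℝ := Real.sqrt (-μ₀) with hcdef
        have hc0 : 0 < c := Real.sqrt_pos.mpr (by linarith)
        have hcne : c ≠ 0 := ne_of_gt hc0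
        have hc2 : c * c = -μ₀ := Real.mul_self_sqrt (by linarith)
        set J : E →ₗ[ℝ] E := c⁻¹ • T i₀ with hJdef
        have hJapp : ∀ x, J x = c⁻¹ • T i₀ x := fun x => rfl
        have hJ2 : ∀ x, J (J x) = -x := by
          intro x
          have h1 : J (J x) = (c⁻¹ * (c⁻¹ * μ₀)) • x := by
            rw [hJapp, hJapp, map_smul, hμ₀ x, smul_smul, smul_smul, mul_assoc]
          have h2 : c⁻¹ * (c⁻¹ * μ₀) = -1 := by
            rw [← mul_assoc]
            field_simp
            linarith
          rw [h1, h2, neg_one_smul]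
        have hJu : J u ≠ 0 := by
          rw [hJapp]
          exact smul_ne_zero (inv_ne_zero hcne) hi₀
        have hJc : ∀ j x, J (T j x) = T j (J x) := by
          intro j x
          rw [hJapp, hJapp, map_smul, hc i₀ j x]
        have hJsk : ∀ x y, ⟪J x, y⟫ = -⟪x, J y⟫ := by
          intro x y
          rw [hJapp, hJapp, real_inner_smul_left, real_inner_smul_right, hsk i₀]
          ring
        have hmem : ∀ i, T i u ∈ (ℝ ∙ J u) := by
          intro i
          by_cases hi : T i u = 0
          · rw [hi]; exact Submodule.zero_mem _
          · obtain ⟨μ, hμneg, hμi⟩ := hsq i hi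
            set d : ℝ := Real.sqrt (-μ) with hddef
            have hd : 0 < d := Real.sqrt_pos.mpr (by linarith)
            have hd2 : d * d = -μ := Real.mul_self_sqrt (by linarith)
            set P : E →ₗ[ℝ] E := J ∘ₗ (d⁻¹ • T i) with hPdef
            have hPapp : ∀ x, P x = J (d⁻¹ • T i x) := fun x => rfl
            have hPsymm : P.IsSymmetric := by
              intro x y
              rw [hPapp, hPapp, map_smul, map_smul, real_inner_smul_left,
                real_inner_smul_right]
              congr 1
              rw [hJsk, hsk i, neg_neg, hJc i y]
            have hPcomm : ∀ j x, P (T j x) = T j (P x) := by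
              intro j x
              simp only [hPapp, map_smul, hJc, hc i j]
            obtain ⟨ν, hν⟩ := hscalar P hPsymm hPcomm
            have hPP : ∀ x, P (P x) = x := by
              intro x
              have h1 : P (P x) = (d⁻¹ * d⁻¹) • (J (J (T i (T i x)))) := by
                simp only [hPapp, map_smul, hJc, smul_smul, mul_assoc]
              rw [h1, hJ2, hμi x, smul_neg, smul_smul]
              have h2 : d⁻¹ * d⁻¹ * μ = -1 := by
                field_simp
                linarith
              rw [h2, neg_one_smul, neg_neg]
            have hν2 : ν * ν = 1 := by
              have h1 := hPP u
              rw [hν u, map_smul, hν u, smul_smul] at h1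
              have := smul_left_injective ℝ hu0 (h1.trans (one_smul ℝ u).symm)
              exact this
            have h2 : J (P u) = ν • J u := by rw [hν u, map_smul]
            rw [hPapp, hJ2] at h2
            have h3 : T i u = -(d * ν) • J u := by
              have h4 : d⁻¹ • T i u = -(ν • J u) := by
                rw [← h2, neg_neg]
              have h5 := congrArg (fun z => d • z) h4
              simp only [smul_smul, smul_neg] at h5
              rw [mul_inv_cancel₀ (ne_of_gt hd), one_smul] at h5
              rw [h5, neg_smul]
            rw [h3]
            exact Submodule.smul_mem _ _ (Submodule.mem_span_singleton_self _)
        have hspan : span ℝ (Set.range fun i => T i u) ≤ ℝ ∙ J u := by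
          rw [Submodule.span_le]
          rintro x ⟨i, rfl⟩
          exact hmem i
        have h1 : finrank ℝ (span ℝ (Set.range fun i => T i u)) ≤ 1 := by
          have := Submodule.finrank_mono hspan
          rwa [finrank_span_singleton hJu] at this
        have hdet : LinearMap.det J * LinearMap.det J = (-1 : ℝ) ^ finrank ℝ E := by
          have hJJ : J ∘ₗ J = (-1 : ℝ) • LinearMap.id := by
            ext x
            simp [hJ2 x]
          rw [← LinearMap.det_comp, hJJ, LinearMap.det_smul, LinearMap.det_id, mul_one]
        have heven : Even (finrank ℝ E) := by
          by_contra hodd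
          have hodd' : Odd (finrank ℝ E) := Nat.not_even_iff_odd.mp hodd
          rw [hodd'.neg_one_pow] at hdet
          nlinarith [hdet]
        have hpos : 0 < finrank ℝ E := finrank_pos
        obtain ⟨r, hr⟩ := heven
        omega



open Module

/-- `η` is a contact form on the odd-dimensional real Lie algebra `L`: equivalently to the
condition `(∂η)^n ∧ η ≠ 0` (with `dim L = 2n+1`, `∂η (x,y) = -η ⁅x,y⁆`), `η ≠ 0` and the
2-form `∂η` is nondegenerate on the kernel of `η`. -/
def IsContactForm {L : Type*} [LieRing L] [LieAlgebra ℝ L] (η : Module.Dual ℝ L) : Prop :=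
  η ≠ 0 ∧ ∀ x : L, η x = 0 → (∀ y : L, η y = 0 → η ⁅x, y⁆ = 0) → x = 0

/-- `α` is an exact symplectic form on the even-dimensional real Lie algebra `L`:
equivalently to `(∂α)^m ≠ 0` (with `dim L = 2m`), the 2-form `∂α (x,y) = -α ⁅x,y⁆`
is nondegenerate. -/
def IsExactSymplecticForm {L : Type*} [LieRing L] [LieAlgebra ℝ L] (α : Module.Dual ℝ L) : Prop :=
  ∀ x : L, (∀ y : L, α ⁅x, y⁆ = 0) → x = 0

/-- A Lie algebra of odd dimension at least 5 which is flat in Milnor's sense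
(`𝔤 = A₁ ⊕ A₂` orthogonally, `A₁` an abelian ideal, `A₂` an abelian subalgebra acting on
`A₁` by skew-adjoint maps for a positive-definite inner product) has no contact form. -/
theorem flat_no_contact {L : Type*} [LieRing L] [LieAlgebra ℝ L]
    [FiniteDimensional ℝ L] (n : ℕ) (hn : 2 ≤ n) (hdim : finrank ℝ L = 2 * n + 1)
    (g : LinearMap.BilinForm ℝ L)
    (hgsym : ∀ x y : L, g x y = g y x)
    (hgpos : ∀ x : L, x ≠ 0 → 0 < g x x)
    (A₁ A₂ : Submodule ℝ L) (hcompl : IsCompl A₁ A₂)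
    (horth : ∀ x ∈ A₁, ∀ y ∈ A₂, g x y = 0)
    (hideal : ∀ x : L, ∀ y ∈ A₁, ⁅x, y⁆ ∈ A₁)
    (hab₁ : ∀ x ∈ A₁, ∀ y ∈ A₁, ⁅x, y⁆ = (0 : L))
    (hab₂ : ∀ x ∈ A₂, ∀ y ∈ A₂, ⁅x, y⁆ = (0 : L))
    (hskew : ∀ a ∈ A₂, ∀ x ∈ A₁, ∀ y ∈ A₁, g ⁅a, x⁆ y + g x ⁅a, y⁆ = 0) :
    ∀ η : Module.Dual ℝ L, ¬ IsContactForm η := by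
  intro η hcon
  obtain ⟨hη0, hcontact⟩ := hcon
  -- inner product structure from g
  let core : InnerProductSpace.Core ℝ L :=
    { inner := fun x y => g x y
      conj_inner_symm := fun x y => by simpa using hgsym y x
      re_inner_nonneg := fun x => by
        by_cases hx : x = 0
        · simp [hx]
        · simpa using (hgpos x hx).le
      definite := fun x hx => by
        by_contra h
        exact absurd hx (ne_of_gt (hgpos x h))
      add_left := fun x y z => by simp
      smul_left := fun x y r => by simp }
  letI : NormedAddCommGroup L := core.toNormedAddCommGroup
  letI : InnerProductSpace ℝ L := InnerProductSpace.ofCore core.toCore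
  have hginner : ∀ a b : L, ⟪a, b⟫ = g a b := fun _ _ => rfl
  -- Riesz representative of η on A₁
  let φ : ↥A₁ →L[ℝ] ℝ := (η.comp A₁.subtype).toContinuousLinearMap
  set u₀ : ↥A₁ := (InnerProductSpace.toDual ℝ ↥A₁).symm φ with hu₀def
  have hu : ∀ z : ↥A₁, ⟪u₀, z⟫ = η ↑z := fun z => by
    rw [hu₀def, InnerProductSpace.toDual_symm_apply]
    simp [φ]
  set u : L := ↑u₀ with hudef
  have hu₁ : u ∈ A₁ := u₀.2
  have hug : ∀ z ∈ A₁, η z = g u z := by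
    intro z hz
    rw [← hginner, ← hu ⟨z, hz⟩, Submodule.coe_inner]
  -- the commuting skew family on A₁
  let T : ↥A₂ → ↥A₁ →ₗ[ℝ] ↥A₁ := fun a =>
    { toFun := fun x => ⟨⁅(a : L), (x : L)⁆, hideal a x x.2⟩
      map_add' := fun x y => by
        apply Subtype.ext
        simp [lie_add]
      map_smul' := fun r x => by
        apply Subtype.ext
        simp [lie_smul] }
  have hTapp : ∀ (a : ↥A₂) (x : ↥A₁), ((T a x : ↥A₁) : L) = ⁅(a : L), (x : L)⁆ :=
    fun a x => rfl
  have hTsk : ∀ (a : ↥A₂) (x y : ↥A₁), ⟪T a x, y⟫ = -⟪x, T a y⟫ := by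
    intro a x y
    rw [Submodule.coe_inner, Submodule.coe_inner, hTapp, hTapp, hginner, hginner]
    have := hskew a a.2 x x.2 y y.2
    linarith
  have hTc : ∀ (a b : ↥A₂) (x : ↥A₁), T a (T b x) = T b (T a x) := by
    intro a b x
    apply Subtype.ext
    rw [hTapp, hTapp, hTapp, hTapp]
    have h1 : ⁅⁅(a : L), (b : L)⁆, (x : L)⁆ = 0 := by
      rw [hab₂ a a.2 b b.2, zero_lie]
    have h2 := lie_lie (a : L) (b : L) (x : L)
    rw [h1] at h2
    exact sub_eq_zero.mp h2.symm
  -- the orbit span and its dimension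
  set S : Submodule ℝ ↥A₁ := Submodule.span ℝ (Set.range fun a : ↥A₂ => T a u₀) with hSdef
  set s : ℕ := finrank ℝ S with hsdef
  -- (F2) half-dimension bound
  have hF2 : 2 * s ≤ finrank ℝ ↥A₁ :=
    halfdim (finrank ℝ ↥A₁) (le_refl _) T hTsk hTc u₀
  -- the linear map a ↦ T a u₀
  let χ : ↥A₂ →ₗ[ℝ] ↥A₁ :=
    { toFun := fun a => T a u₀
      map_add' := fun a b => by
        apply Subtype.ext
        rw [hTapp]
        push_cast
        rw [add_lie]
        rfl
      map_smul' := fun r a => by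
        apply Subtype.ext
        rw [hTapp]
        push_cast
        rw [smul_lie]
        rfl }
  have hχrange : LinearMap.range χ = S := by
    apply le_antisymm
    · rintro _ ⟨a, rfl⟩
      exact Submodule.subset_span ⟨a, rfl⟩
    · rw [hSdef, Submodule.span_le]
      rintro _ ⟨a, rfl⟩
      exact ⟨a, rfl⟩
  -- (F1) s ≤ dim A₂ and rank-nullity
  have hF1 : s ≤ finrank ℝ ↥A₂ := by
    rw [hsdef, ← hχrange]
    exact LinearMap.finrank_range_le χ
  have hrn : s + finrank ℝ ↥(LinearMap.ker χ) = finrank ℝ ↥A₂ := by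
    rw [hsdef, ← hχrange]
    exact LinearMap.finrank_range_add_finrank_ker χ
  -- orthogonal complement of S in A₁
  have hV : s + finrank ℝ ↥(Sᗮ) = finrank ℝ ↥A₁ :=
    Submodule.finrank_add_finrank_orthogonal S
  -- the radical R
  let R : Submodule ℝ L :=
    { carrier := {x | ∀ y, η ⁅x, y⁆ = 0}
      add_mem' := fun {a b} ha hb y => by
        rw [add_lie, map_add, ha y, hb y, add_zero]
      zero_mem' := fun y => by rw [zero_lie, map_zero]
      smul_mem' := fun r a ha y => by
        rw [smul_lie, map_smul, ha y, smul_zero] }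
  have hRle : finrank ℝ ↥R ≤ 1 := by
    have hinj : Function.Injective (η.comp R.subtype) := by
      rw [← LinearMap.ker_eq_bot]
      apply (Submodule.eq_bot_iff _).mpr
      intro x hx
      have hx0 : η ↑x = 0 := hx
      have := hcontact ↑x hx0 (fun y _ => x.2 y)
      exact Subtype.ext this
    have := LinearMap.finrank_le_finrank_of_injective hinj
    simpa using this
  -- S-perp (inside A₁) sits in R
  have hR₁ : Sᗮ.map A₁.subtype ≤ R := by
    rintro x ⟨x₀, hx₀, rfl⟩
    intro y
    obtain ⟨y₁, hy₁, y₂, hy₂, rfl⟩ := Submodule.mem_sup.mp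
      (by rw [hcompl.sup_eq_top]; trivial : y ∈ A₁ ⊔ A₂)
    show η ⁅(x₀ : L), y₁ + y₂⁆ = 0
    rw [lie_add, map_add]
    have e1 : ⁅(x₀ : L), y₁⁆ = 0 := hab₁ x₀ x₀.2 y₁ hy₁
    have e2 : η ⁅(x₀ : L), y₂⁆ = 0 := by
      have hmem : ⁅y₂, (x₀ : L)⁆ ∈ A₁ := hideal y₂ x₀ x₀.2
      have e3 : ⁅(x₀ : L), y₂⁆ = -⁅y₂, (x₀ : L)⁆ := (lie_skew _ _).symm
      rw [e3, map_neg, hug _ hmem]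
      have e4 := hskew y₂ hy₂ u hu₁ x₀ x₀.2
      have e5 : g ⁅y₂, u⁆ (x₀ : L) = 0 := by
        have hmemS : T ⟨y₂, hy₂⟩ u₀ ∈ S := Submodule.subset_span ⟨⟨y₂, hy₂⟩, rfl⟩
        have := (Submodule.mem_orthogonal S x₀).mp hx₀ _ hmemS
        rw [Submodule.coe_inner, hTapp, hginner] at this
        exact this
      have : g u ⁅y₂, (x₀ : L)⁆ = 0 := by linarith
      rw [this, neg_zero]
    rw [e1, map_zero, zero_add, e2]
  have hR₂ : (LinearMap.ker χ).map A₂.subtype ≤ R := by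
    rintro a ⟨a₀, ha₀, rfl⟩
    intro y
    obtain ⟨y₁, hy₁, y₂, hy₂, rfl⟩ := Submodule.mem_sup.mp
      (by rw [hcompl.sup_eq_top]; trivial : y ∈ A₁ ⊔ A₂)
    show η ⁅(a₀ : L), y₁ + y₂⁆ = 0
    rw [lie_add, map_add]
    have e1 : ⁅(a₀ : L), y₂⁆ = 0 := hab₂ a₀ a₀.2 y₂ hy₂
    have e2 : η ⁅(a₀ : L), y₁⁆ = 0 := by
      have hmem : ⁅(a₀ : L), y₁⁆ ∈ A₁ := hideal a₀ y₁ hy₁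
      rw [hug _ hmem]
      have e4 := hskew a₀ a₀.2 u hu₁ y₁ hy₁
      have e5 : ⁅(a₀ : L), u⁆ = 0 := by
        have h6 : χ a₀ = 0 := ha₀
        have h7 : ((χ a₀ : ↥A₁) : L) = 0 := by rw [h6]; rfl
        exact h7
      rw [e5] at e4
      have : g (0 : L) y₁ = 0 := by simp
      linarith
    rw [e1, map_zero, add_zero, e2]
  -- dimension count
  have hdisj : Disjoint (Sᗮ.map A₁.subtype) ((LinearMap.ker χ).map A₂.subtype) :=
    Disjoint.mono (Submodule.map_subtype_le _ _) (Submodule.map_subtype_le _ _)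
      hcompl.disjoint
  have hsum : finrank ℝ ↥(Sᗮ.map A₁.subtype) + finrank ℝ ↥((LinearMap.ker χ).map A₂.subtype)
      ≤ finrank ℝ ↥R := by
    have h1 := Submodule.finrank_sup_add_finrank_inf_eq (Sᗮ.map A₁.subtype)
      ((LinearMap.ker χ).map A₂.subtype)
    rw [hdisj.eq_bot, finrank_bot, add_zero] at h1
    rw [← h1]
    exact Submodule.finrank_mono (sup_le hR₁ hR₂)
  rw [Submodule.finrank_map_subtype_eq, Submodule.finrank_map_subtype_eq] at hsum
  have hpq : finrank ℝ ↥A₁ + finrank ℝ ↥A₂ = 2 * n + 1 := by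
    rw [Submodule.finrank_add_eq_of_isCompl hcompl, hdim]
  omega
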